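/- For every n-node state space A, there is a historyless randomized uncoupled protocol self-stabilizing on all games over A if and only if the stay-or-roll protocol is self-stabilizing on all games over A. -/

import Mathlib

open scoped Classical

variable {n : ℕ} {A : Fin n → Type*}

/-- `α` is a best response of node `i` at state `a` with respect to `i`'s own
utility function `ui`. -/
def IsBR1 (ui : (∀ j, A j) → ℝ) (i : Fin n) (α : A i) (a : ∀ j, A j) : Prop :=
  ∀ β : A i, ui (Function.update a i β) ≤ ui (Function.update a i α)

/-- A pure Nash equilibrium: every node is best-responding. -/
def PNE (u : ∀ i : Fin n, (∀ j, A j) → ℝ) (a : ∀ j, A j) : Prop :=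
  ∀ i : Fin n, IsBR1 (u i) i (a i) a

/-- `α` is a weakly dominant action of node `i`: it is a best response at every
state. -/
def WDom (ui : (∀ j, A j) → ℝ) (i : Fin n) (α : A i) : Prop :=
  ∀ a : ∀ j, A j, IsBR1 ui i α a

/-- Transition probability of the synchronous dynamics: all nodes simultaneously and
independently sample new actions from their randomized reaction functions. -/
def kernel (f : ∀ i : Fin n, (∀ j, A j) → A i → ℝ) (a b : ∀ j, A j) : ℝ :=
  ∏ i : Fin n, f i a (b i)

/-- Distribution of the state at time `t`, starting from `a0`. -/
noncomputable def evolve [∀ i, Fintype (A i)] [∀ i, DecidableEq (A i)]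
    (f : ∀ i : Fin n, (∀ j, A j) → A i → ℝ) (a0 : ∀ j, A j) :
    ℕ → (∀ j, A j) → ℝ
  | 0 => fun b => if b = a0 then 1 else 0
  | t + 1 => fun b => ∑ a : ∀ j, A j, evolve f a0 t a * kernel f a b

/-- A historyless randomized uncoupled protocol assigns to each node's utility
function (independently of the others' utilities) a randomized reaction function;
validity says each value is a probability distribution over the node's actions. -/
def ValidProto [∀ i, Fintype (A i)]
    (P : ∀ i : Fin n, ((∀ j, A j) → ℝ) → (∀ j, A j) → A i → ℝ) : Prop :=
  ∀ (i : Fin n) (ui : (∀ j, A j) → ℝ) (a : ∀ j, A j),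
    (∀ α : A i, 0 ≤ P i ui a α) ∧ ∑ α : A i, P i ui a α = 1

/-- The protocol is self-stabilizing on all games over `A`: for every game with at
least one pure Nash equilibrium, from every initial state the probability of being
at a PNE at time `t` tends to `1`. -/
def SelfStab [∀ i, Fintype (A i)] [∀ i, DecidableEq (A i)]
    (P : ∀ i : Fin n, ((∀ j, A j) → ℝ) → (∀ j, A j) → A i → ℝ) : Prop :=
  ∀ u : ∀ i : Fin n, (∀ j, A j) → ℝ, (∃ p, PNE u p) →
    ∀ a0 : ∀ j, A j,
      Filter.Tendsto
        (fun t => ∑ b ∈ Finset.univ.filter (fun b => PNE u b),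
          evolve (fun i => P i (u i)) a0 t b)
        Filter.atTop (nhds 1)


/-- The stay-or-roll protocol: a node keeps its action if it is best-responding at
the current state, and otherwise picks an action uniformly at random. -/
noncomputable def SOR [∀ i, Fintype (A i)] [∀ i, DecidableEq (A i)]
    (i : Fin n) (ui : (∀ j, A j) → ℝ) (a : ∀ j, A j) (α : A i) : ℝ :=
  if IsBR1 ui i (a i) a then (if α = a i then 1 else 0)
  else 1 / (Fintype.card (A i))

/-! ### Section 1 : basic lemmas -/

/-- Best-response depends only on the coordinates other than `i`. -/
lemma isBR1_ext {ui : (∀ j, A j) → ℝ} {i : Fin n} {α : A i} {a b : ∀ j, A j}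
    (h : ∀ j, j ≠ i → a j = b j) : IsBR1 ui i α a → IsBR1 ui i α b := by
  intro H β
  have key : ∀ γ : A i, Function.update b i γ = Function.update a i γ := by
    intro γ
    funext j
    by_cases hj : j = i
    · subst hj; simp
    · simp [Function.update_of_ne hj, (h j hj).symm]
  rw [key β, key α]
  exact H β

/-- A coordinate with a subsingleton action space is always best responding. -/
lemma isBR1_of_subsingleton {ui : (∀ j, A j) → ℝ} {i : Fin n} (h : Subsingleton (A i))
    (α : A i) (a : ∀ j, A j) : IsBR1 ui i α a := by
  intro β
  have : β = α := Subsingleton.elim β α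
  rw [this]

/-- There always is a best response (finite nonempty action space). -/
lemma exists_isBR1 [∀ i, Fintype (A i)] [∀ i, Nonempty (A i)]
    (ui : (∀ j, A j) → ℝ) (i : Fin n) (a : ∀ j, A j) :
    ∃ α : A i, IsBR1 ui i α a := by
  obtain ⟨α, -, hα⟩ := Finset.exists_max_image Finset.univ
    (fun β : A i => ui (Function.update a i β)) ⟨Classical.arbitrary (A i), Finset.mem_univ _⟩
  exact ⟨α, fun β => hα β (Finset.mem_univ β)⟩



/-! ### Section 2 : kernel and evolve basics -/

section Evo

variable [∀ i, Fintype (A i)] [∀ i, DecidableEq (A i)]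

/-- Validity of a family of reaction functions. -/
def ValidF (f : ∀ i : Fin n, (∀ j, A j) → A i → ℝ) : Prop :=
  ∀ (i : Fin n) (a : ∀ j, A j), (∀ α : A i, 0 ≤ f i a α) ∧ ∑ α : A i, f i a α = 1

variable {f : ∀ i : Fin n, (∀ j, A j) → A i → ℝ}

lemma validF_le_one (hf : ValidF f) (i : Fin n) (a : ∀ j, A j) (α : A i) :
    f i a α ≤ 1 := by
  have h := hf i a
  calc f i a α ≤ ∑ β : A i, f i a β :=
        Finset.single_le_sum (fun β _ => (h.1 β)) (Finset.mem_univ α)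
    _ = 1 := h.2

lemma kernel_nonneg (hf : ValidF f) (a b : ∀ j, A j) : 0 ≤ kernel f a b :=
  Finset.prod_nonneg fun i _ => (hf i a).1 (b i)

lemma kernel_le_one (hf : ValidF f) (a b : ∀ j, A j) : kernel f a b ≤ 1 :=
  Finset.prod_le_one (fun i _ => (hf i a).1 (b i)) (fun i _ => validF_le_one hf i a (b i))

lemma kernel_rowsum (hf : ValidF f) (a : ∀ j, A j) : ∑ b : ∀ j, A j, kernel f a b = 1 := by
  unfold kernel
  have h2 : ∑ b : ∀ j, A j, ∏ i : Fin n, f i a (b i) = ∏ i : Fin n, ∑ α : A i, f i a α :=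
    (Fintype.prod_sum (fun i (α : A i) => f i a α)).symm
  rw [h2]
  exact Finset.prod_eq_one fun i _ => (hf i a).2

lemma evolve_succ (a0 : ∀ j, A j) (t : ℕ) (b : ∀ j, A j) :
    evolve f a0 (t + 1) b = ∑ a : ∀ j, A j, evolve f a0 t a * kernel f a b := by
  simp [evolve]

lemma evolve_zero (a0 b : ∀ j, A j) :
    evolve f a0 0 b = if b = a0 then 1 else 0 := by
  simp [evolve]

lemma evolve_nonneg (hf : ValidF f) (a0 : ∀ j, A j) (t : ℕ) (b : ∀ j, A j) :
    0 ≤ evolve f a0 t b := by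
  induction t generalizing b with
  | zero => rw [evolve_zero]; split <;> norm_num
  | succ t ih =>
      rw [evolve_succ]
      exact Finset.sum_nonneg fun a _ => mul_nonneg (ih a) (kernel_nonneg hf a b)

lemma evolve_mass (hf : ValidF f) (a0 : ∀ j, A j) (t : ℕ) :
    ∑ b : ∀ j, A j, evolve f a0 t b = 1 := by
  induction t with
  | zero => simp [evolve_zero]
  | succ t ih =>
      calc ∑ b : ∀ j, A j, evolve f a0 (t+1) b
          = ∑ b : ∀ j, A j, ∑ a : ∀ j, A j, evolve f a0 t a * kernel f a b := by
            simp [evolve_succ]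
        _ = ∑ a : ∀ j, A j, ∑ b : ∀ j, A j, evolve f a0 t a * kernel f a b :=
            Finset.sum_comm
        _ = ∑ a : ∀ j, A j, evolve f a0 t a * ∑ b : ∀ j, A j, kernel f a b := by
            simp [Finset.mul_sum]
        _ = ∑ a : ∀ j, A j, evolve f a0 t a := by
            simp [kernel_rowsum hf]
        _ = 1 := ih

lemma evolve_le_one (hf : ValidF f) (a0 : ∀ j, A j) (t : ℕ) (b : ∀ j, A j) :
    evolve f a0 t b ≤ 1 := by
  calc evolve f a0 t b ≤ ∑ c : ∀ j, A j, evolve f a0 t c :=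
      Finset.single_le_sum (fun c _ => evolve_nonneg hf a0 t c) (Finset.mem_univ b)
    _ = 1 := evolve_mass hf a0 t

lemma evolve_ck (a0 : ∀ j, A j) (s t : ℕ) (b : ∀ j, A j) :
    evolve f a0 (s + t) b = ∑ c : ∀ j, A j, evolve f a0 s c * evolve f c t b := by
  induction t generalizing b with
  | zero =>
      simp only [Nat.add_zero, evolve_zero, mul_ite, mul_one, mul_zero,
        Finset.sum_ite_eq, Finset.mem_univ, if_true]
  | succ t ih =>
      rw [show s + (t+1) = (s+t) + 1 by omega, evolve_succ]
      calc ∑ a : ∀ j, A j, evolve f a0 (s+t) a * kernel f a b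
          = ∑ a : ∀ j, A j, (∑ c : ∀ j, A j, evolve f a0 s c * evolve f c t a) * kernel f a b := by
            simp [ih]
        _ = ∑ a : ∀ j, A j, ∑ c : ∀ j, A j, evolve f a0 s c * evolve f c t a * kernel f a b := by
            simp [Finset.sum_mul]
        _ = ∑ c : ∀ j, A j, ∑ a : ∀ j, A j, evolve f a0 s c * evolve f c t a * kernel f a b :=
            Finset.sum_comm
        _ = ∑ c : ∀ j, A j, evolve f a0 s c * ∑ a : ∀ j, A j, evolve f c t a * kernel f a b := by
            congr 1; funext c; rw [Finset.mul_sum]; congr 1; funext a; ring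
        _ = ∑ c : ∀ j, A j, evolve f a0 s c * evolve f c (t+1) b := by
            simp [evolve_succ]

end Evo

/-! ### Section 3 : SOR absorption machinery -/

section SORsec

variable [∀ i, Fintype (A i)] [∀ i, DecidableEq (A i)] [∀ i, Nonempty (A i)]

/-- The family of reaction functions of the SOR protocol for the game `u`. -/
noncomputable def sorF (u : ∀ i : Fin n, (∀ j, A j) → ℝ) :
    ∀ i : Fin n, (∀ j, A j) → A i → ℝ := fun i => SOR i (u i)

variable (u : ∀ i : Fin n, (∀ j, A j) → ℝ)

lemma validF_sor : ValidF (sorF u) := by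
  intro i a
  constructor
  · intro α
    unfold sorF SOR
    split
    · split <;> norm_num
    · positivity
  · unfold sorF SOR
    split
    · simp
    · rw [Finset.sum_const, Finset.card_univ, nsmul_eq_mul]
      have hc : (0:ℝ) < Fintype.card (A i) := by exact_mod_cast Fintype.card_pos
      field_simp

/-- A one-step SOR transition has positive probability iff best-responding
coordinates are kept. -/
lemma sor_kernel_pos {a b : ∀ j, A j}
    (h : ∀ i, IsBR1 (u i) i (a i) a → b i = a i) : 0 < kernel (sorF u) a b := by
  unfold kernel
  apply Finset.prod_pos
  intro i _
  unfold sorF SOR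
  by_cases hbr : IsBR1 (u i) i (a i) a
  · rw [if_pos hbr, if_pos (h i hbr)]; norm_num
  · rw [if_neg hbr]
    have hc : (0:ℝ) < Fintype.card (A i) := by exact_mod_cast Fintype.card_pos
    positivity

lemma sor_kernel_pne {p : ∀ j, A j} (hp : PNE u p) (b : ∀ j, A j) :
    kernel (sorF u) p b = if b = p then 1 else 0 := by
  unfold kernel sorF SOR
  by_cases hb : b = p
  · subst hb
    rw [if_pos rfl]
    apply Finset.prod_eq_one
    intro i _
    rw [if_pos (hp i), if_pos rfl]
  · rw [if_neg hb]
    have : ∃ i, b i ≠ p i := by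
      by_contra hc
      push_neg at hc
      exact hb (funext hc)
    obtain ⟨i, hi⟩ := this
    apply Finset.prod_eq_zero (Finset.mem_univ i)
    rw [if_pos (hp i), if_neg hi]

lemma evolve_sor_pne {p : ∀ j, A j} (hp : PNE u p) (t : ℕ) (b : ∀ j, A j) :
    evolve (sorF u) p t b = if b = p then 1 else 0 := by
  induction t generalizing b with
  | zero => rw [evolve_zero]
  | succ t ih =>
      rw [evolve_succ]
      calc ∑ a : ∀ j, A j, evolve (sorF u) p t a * kernel (sorF u) a b
          = ∑ a : ∀ j, A j, (if a = p then 1 else 0) * kernel (sorF u) a b := by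
            simp only [ih]
        _ = kernel (sorF u) p b := by
            simp [Finset.sum_ite_eq']
        _ = if b = p then 1 else 0 := sor_kernel_pne u hp b

/-- Probability of being at a PNE at time `t` under SOR, started from `a0`. -/
noncomputable def pmass (a0 : ∀ j, A j) (t : ℕ) : ℝ :=
  ∑ b ∈ Finset.univ.filter (fun b => PNE u b), evolve (sorF u) a0 t b

lemma pmass_nonneg (a0 : ∀ j, A j) (t : ℕ) : 0 ≤ pmass u a0 t :=
  Finset.sum_nonneg fun b _ => evolve_nonneg (validF_sor u) a0 t b

lemma pmass_le_one (a0 : ∀ j, A j) (t : ℕ) : pmass u a0 t ≤ 1 := by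
  calc pmass u a0 t ≤ ∑ b : ∀ j, A j, evolve (sorF u) a0 t b :=
        Finset.sum_le_sum_of_subset_of_nonneg (Finset.filter_subset _ _)
          (fun b _ _ => evolve_nonneg (validF_sor u) a0 t b)
    _ = 1 := evolve_mass (validF_sor u) a0 t

lemma pmass_pne {p : ∀ j, A j} (hp : PNE u p) (t : ℕ) : pmass u p t = 1 := by
  unfold pmass
  rw [Finset.sum_eq_single_of_mem p]
  · rw [evolve_sor_pne u hp, if_pos rfl]
  · simp [hp]
  · intro b _ hb
    rw [evolve_sor_pne u hp, if_neg hb]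

lemma pmass_mono (a0 : ∀ j, A j) {s t : ℕ} (h : s ≤ t) :
    pmass u a0 s ≤ pmass u a0 t := by
  induction t with
  | zero => simp_all
  | succ t ih =>
      rcases Nat.lt_or_ge s (t+1) with hlt | hge
      · have hs : s ≤ t := by omega
        refine le_trans (ih hs) ?_
        unfold pmass
        calc ∑ b ∈ Finset.univ.filter (fun b => PNE u b), evolve (sorF u) a0 t b
            = ∑ b ∈ Finset.univ.filter (fun b => PNE u b),
                evolve (sorF u) a0 t b * ∑ c ∈ Finset.univ.filter (fun c => PNE u c),
                  kernel (sorF u) b c := by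
              apply Finset.sum_congr rfl
              intro b hb
              have hbp : PNE u b := by simpa using hb
              have : ∑ c ∈ Finset.univ.filter (fun c => PNE u c), kernel (sorF u) b c = 1 := by
                rw [Finset.sum_eq_single_of_mem b]
                · rw [sor_kernel_pne u hbp, if_pos rfl]
                · simpa using hbp
                · intro c _ hc
                  rw [sor_kernel_pne u hbp, if_neg hc]
              rw [this, mul_one]
          _ = ∑ b ∈ Finset.univ.filter (fun b => PNE u b),
                ∑ c ∈ Finset.univ.filter (fun c => PNE u c),
                  evolve (sorF u) a0 t b * kernel (sorF u) b c := by
              simp [Finset.mul_sum]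
          _ = ∑ c ∈ Finset.univ.filter (fun c => PNE u c),
                ∑ b ∈ Finset.univ.filter (fun b => PNE u b),
                  evolve (sorF u) a0 t b * kernel (sorF u) b c := Finset.sum_comm
          _ ≤ ∑ c ∈ Finset.univ.filter (fun c => PNE u c),
                ∑ b : ∀ j, A j, evolve (sorF u) a0 t b * kernel (sorF u) b c := by
              apply Finset.sum_le_sum
              intro c _
              apply Finset.sum_le_sum_of_subset_of_nonneg (Finset.filter_subset _ _)
              intro b _ _
              exact mul_nonneg (evolve_nonneg (validF_sor u) a0 t b)
                (kernel_nonneg (validF_sor u) b c)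
          _ = ∑ c ∈ Finset.univ.filter (fun c => PNE u c), evolve (sorF u) a0 (t+1) c := by
              simp [evolve_succ]
      · have : s = t + 1 := by omega
        subst this; exact le_refl _

/-- Probability of not being at a PNE. -/
noncomputable def nmass (a0 : ∀ j, A j) (t : ℕ) : ℝ :=
  ∑ b ∈ Finset.univ.filter (fun b => ¬ PNE u b), evolve (sorF u) a0 t b

lemma pmass_add_nmass (a0 : ∀ j, A j) (t : ℕ) : pmass u a0 t + nmass u a0 t = 1 := by
  unfold pmass nmass
  rw [Finset.sum_filter_add_sum_filter_not]
  exact evolve_mass (validF_sor u) a0 t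

lemma nmass_contract {N : ℕ} {ε : ℝ} (hε : ∀ c, ¬ PNE u c → nmass u c N ≤ 1 - ε)
    (a0 : ∀ j, A j) (s : ℕ) :
    nmass u a0 (s + N) ≤ (1 - ε) * nmass u a0 s := by
  have hnn : ∀ (c : ∀ j, A j) (t : ℕ), 0 ≤ nmass u c t := fun c t =>
    Finset.sum_nonneg fun b _ => evolve_nonneg (validF_sor u) c t b
  have key : nmass u a0 (s + N)
      = ∑ c : ∀ j, A j, evolve (sorF u) a0 s c * nmass u c N := by
    unfold nmass
    calc ∑ b ∈ Finset.univ.filter (fun b => ¬ PNE u b), evolve (sorF u) a0 (s + N) b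
        = ∑ b ∈ Finset.univ.filter (fun b => ¬ PNE u b),
            ∑ c : ∀ j, A j, evolve (sorF u) a0 s c * evolve (sorF u) c N b := by
          simp [evolve_ck]
      _ = ∑ c : ∀ j, A j, ∑ b ∈ Finset.univ.filter (fun b => ¬ PNE u b),
            evolve (sorF u) a0 s c * evolve (sorF u) c N b := Finset.sum_comm
      _ = ∑ c : ∀ j, A j, evolve (sorF u) a0 s c *
            ∑ b ∈ Finset.univ.filter (fun b => ¬ PNE u b), evolve (sorF u) c N b := by
          simp [Finset.mul_sum]
  rw [key]
  have hsplit : ∀ c : ∀ j, A j, evolve (sorF u) a0 s c * nmass u c N ≤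
      evolve (sorF u) a0 s c * ((1 - ε) * (if PNE u c then 0 else 1)) := by
    intro c
    by_cases hc : PNE u c
    · have : nmass u c N = 0 := by
        have h1 := pmass_add_nmass u c N
        rw [pmass_pne u hc] at h1
        linarith
      rw [this, if_pos hc]
      simp
    · rw [if_neg hc, mul_one]
      exact mul_le_mul_of_nonneg_left (hε c hc) (evolve_nonneg (validF_sor u) a0 s c)
  calc ∑ c : ∀ j, A j, evolve (sorF u) a0 s c * nmass u c N
      ≤ ∑ c : ∀ j, A j, evolve (sorF u) a0 s c * ((1 - ε) * (if PNE u c then 0 else 1)) :=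
        Finset.sum_le_sum fun c _ => hsplit c
    _ = ∑ c : ∀ j, A j, (if ¬ PNE u c then (1 - ε) * evolve (sorF u) a0 s c else 0) := by
        apply Finset.sum_congr rfl
        intro c _
        by_cases hc : PNE u c <;> simp [hc] <;> ring
    _ = (1 - ε) * nmass u a0 s := by
        rw [← Finset.sum_filter]
        unfold nmass
        rw [Finset.mul_sum]

/-- Main absorption lemma: if from every state a PNE is reached with positive
probability at some time, then SOR's PNE-probability tends to 1. -/
lemma sor_tendsto_of_reach (hreach : ∀ b : ∀ j, A j, ∃ t, 0 < pmass u b t)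
    (a0 : ∀ j, A j) :
    Filter.Tendsto (fun t => pmass u a0 t) Filter.atTop (nhds 1) := by
  classical
  choose T hT using hreach
  have hne : (Finset.univ : Finset (∀ j, A j)).Nonempty := Finset.univ_nonempty
  set N : ℕ := Finset.univ.sup T + 1 with hN
  have hNpos : 0 < N := Nat.succ_pos _
  set ε : ℝ := Finset.univ.inf' hne (fun b => pmass u b N) with hEps
  have hεpos : 0 < ε := by
    rw [hEps, Finset.lt_inf'_iff]
    intro b _
    calc (0:ℝ) < pmass u b (T b) := hT b
      _ ≤ pmass u b N := pmass_mono u b (by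
          have := Finset.le_sup (Finset.mem_univ b) (f := T)
          omega)
  have hεle : ∀ c, ¬ PNE u c → nmass u c N ≤ 1 - ε := by
    intro c _
    have h1 := pmass_add_nmass u c N
    have h2 : ε ≤ pmass u c N := by
      rw [hEps]
      exact Finset.inf'_le _ (Finset.mem_univ c)
    linarith
  -- geometric decay along multiples of N
  have hgeo : ∀ k, nmass u a0 (k * N) ≤ (1 - ε) ^ k := by
    intro k
    induction k with
    | zero =>
        have := pmass_add_nmass u a0 0
        have := pmass_nonneg u a0 0
        simpa using by linarith
    | succ k ih =>
        have : (k+1) * N = k * N + N := by ring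
        rw [this]
        calc nmass u a0 (k * N + N) ≤ (1 - ε) * nmass u a0 (k * N) :=
              nmass_contract u hεle a0 (k * N)
          _ ≤ (1 - ε) * (1 - ε) ^ k := by
              apply mul_le_mul_of_nonneg_left ih
              have h2 : ε ≤ 1 := by
                have h3 := pmass_le_one u a0 N
                have h4 : ε ≤ pmass u a0 N := Finset.inf'_le _ (Finset.mem_univ a0)
                linarith
              linarith
          _ = (1 - ε) ^ (k + 1) := by ring
  have hnm_anti : ∀ {s t : ℕ}, s ≤ t → nmass u a0 t ≤ nmass u a0 s := by
    intro s t hst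
    have h1 := pmass_add_nmass u a0 s
    have h2 := pmass_add_nmass u a0 t
    have := pmass_mono u a0 hst
    linarith
  have hbound : ∀ t, nmass u a0 t ≤ (1 - ε) ^ (t / N) := by
    intro t
    calc nmass u a0 t ≤ nmass u a0 (t / N * N) :=
          hnm_anti (Nat.div_mul_le_self t N)
      _ ≤ (1 - ε) ^ (t / N) := hgeo (t / N)
  have h1e : |1 - ε| < 1 := by
    rw [abs_lt]
    constructor
    · have h2 : ε ≤ 1 := by
        have h3 := pmass_le_one u a0 N
        have h4 : ε ≤ pmass u a0 N := Finset.inf'_le _ (Finset.mem_univ a0)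
        linarith
      linarith
    · linarith
  have hpow : Filter.Tendsto (fun k : ℕ => (1 - ε) ^ k) Filter.atTop (nhds 0) :=
    tendsto_pow_atTop_nhds_zero_of_abs_lt_one h1e
  have hdiv : Filter.Tendsto (fun t : ℕ => t / N) Filter.atTop Filter.atTop := by
    rw [Filter.tendsto_atTop]
    intro b
    rw [Filter.eventually_atTop]
    refine ⟨b * N, fun t ht => ?_⟩
    rw [Nat.le_div_iff_mul_le hNpos]
    omega
  have hcomp : Filter.Tendsto (fun t : ℕ => (1 - ε) ^ (t / N)) Filter.atTop (nhds 0) :=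
    hpow.comp hdiv
  have hnm0 : Filter.Tendsto (fun t => nmass u a0 t) Filter.atTop (nhds 0) := by
    apply tendsto_of_tendsto_of_tendsto_of_le_of_le tendsto_const_nhds hcomp
    · intro t
      exact Finset.sum_nonneg fun b _ => evolve_nonneg (validF_sor u) a0 t b
    · intro t
      exact hbound t
  have : Filter.Tendsto (fun t => 1 - nmass u a0 t) Filter.atTop (nhds 1) := by
    have := hnm0.const_sub 1
    simpa using this
  apply this.congr
  intro t
  have := pmass_add_nmass u a0 t
  linarith

end SORsec

/-! ### Section 4 : pinning lemma -/

section Pin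

variable [∀ i, Fintype (A i)] [∀ i, DecidableEq (A i)] [∀ i, Nonempty (A i)]

/-- In a game with a unique PNE `q`, any valid self-stabilizing protocol must keep
every coordinate of `q` with probability one. -/
lemma pin_of_uniquePNE {P : ∀ i : Fin n, ((∀ j, A j) → ℝ) → (∀ j, A j) → A i → ℝ}
    (hval : ValidProto P) (hP : SelfStab P)
    {w : ∀ i : Fin n, (∀ j, A j) → ℝ} {q : ∀ j, A j}
    (hq : PNE w q) (huniq : ∀ b, PNE w b → b = q) (i : Fin n) :
    P i (w i) q (q i) = 1 := by
  classical
  set f : ∀ i : Fin n, (∀ j, A j) → A i → ℝ := fun i => P i (w i) with hf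
  have hvf : ValidF f := fun i a => hval i (w i) a
  have hfilter : Finset.univ.filter (fun b => PNE w b) = {q} := by
    ext b
    simp only [Finset.mem_filter, Finset.mem_univ, true_and, Finset.mem_singleton]
    exact ⟨fun h => huniq b h, fun h => h ▸ hq⟩
  have htend : Filter.Tendsto (fun t => evolve f q t q) Filter.atTop (nhds 1) := by
    have h := hP w ⟨q, hq⟩ q
    rw [hfilter] at h
    simpa using h
  set K : ℝ := kernel f q q with hK
  have hK1 : K ≤ 1 := kernel_le_one hvf q q
  have hstep : ∀ t, evolve f q (t+1) q ≤ evolve f q t q * K + (1 - evolve f q t q) := by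
    intro t
    rw [evolve_succ]
    have hsum : ∑ a : ∀ j, A j, evolve f q t a * kernel f a q
        = evolve f q t q * K + ∑ a ∈ Finset.univ.erase q, evolve f q t a * kernel f a q := by
      rw [← Finset.add_sum_erase _ _ (Finset.mem_univ q)]
    rw [hsum]
    have hb : ∑ a ∈ Finset.univ.erase q, evolve f q t a * kernel f a q
        ≤ ∑ a ∈ Finset.univ.erase q, evolve f q t a := by
      apply Finset.sum_le_sum
      intro a _
      exact mul_le_of_le_one_right (evolve_nonneg hvf q t a) (kernel_le_one hvf a q)
    have hmass : ∑ a ∈ Finset.univ.erase q, evolve f q t a = 1 - evolve f q t q := by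
      have := Finset.add_sum_erase Finset.univ (fun a => evolve f q t a) (Finset.mem_univ q)
      have h2 := evolve_mass hvf q t
      linarith
    linarith
  have h1K : (1:ℝ) ≤ K := by
    have hL : Filter.Tendsto (fun t => evolve f q (t+1) q) Filter.atTop (nhds 1) :=
      htend.comp (Filter.tendsto_add_atTop_nat 1)
    have hR : Filter.Tendsto (fun t => evolve f q t q * K + (1 - evolve f q t q))
        Filter.atTop (nhds (1 * K + (1 - 1))) :=
      ((htend.mul tendsto_const_nhds).add (tendsto_const_nhds.sub htend))
    have := le_of_tendsto_of_tendsto' hL hR hstep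
    linarith [this]
  have hKeq : K = 1 := le_antisymm hK1 h1K
  by_contra hne
  have hle := validF_le_one hvf i q (q i)
  have hlt : f i q (q i) < 1 := lt_of_le_of_ne hle hne
  have : K ≤ f i q (q i) := by
    rw [hK]
    unfold kernel
    rw [← Finset.mul_prod_erase _ _ (Finset.mem_univ i)]
    apply mul_le_of_le_one_right ((hvf i q).1 (q i))
    exact Finset.prod_le_one (fun j _ => (hvf j q).1 (q j))
      (fun j _ => validF_le_one hvf j q (q j))
  linarith

end Pin

/-! ### Section 5 : partner-game constructions -/

section Partners

variable [∀ i, Fintype (A i)] [∀ i, DecidableEq (A i)] [∀ i, Nonempty (A i)]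

/-- Best responses of an indicator utility with a target independent of one's own
coordinate. -/
lemma isBR1_indicator {j : Fin n} {F : (∀ k, A k) → A j}
    (hF : ∀ (b : ∀ k, A k) (β : A j), F (Function.update b j β) = F b)
    (β : A j) (b : ∀ k, A k) :
    IsBR1 (fun c => if c j = F c then (1:ℝ) else 0) j β b ↔ β = F b := by
  have hval : ∀ γ : A j, (fun c => if c j = F c then (1:ℝ) else 0) (Function.update b j γ)
      = if γ = F b then 1 else 0 := by
    intro γ
    simp only [Function.update_self, hF]
  constructor
  · intro h
    have h1 := h (F b)
    rw [hval, hval, if_pos rfl] at h1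
    by_contra hne
    rw [if_neg hne] at h1
    norm_num at h1
  · intro h
    intro γ
    rw [hval, hval, if_pos h]
    split <;> norm_num

/-- The matching-pennies partner construction: if `i` best-responds at `a` and there
are two other coordinates with at least two actions, then there is a game agreeing
with `ui` at `i` whose unique PNE is `a`. -/
lemma exists_uniquePNE_pennies (ui : (∀ j, A j) → ℝ) (i : Fin n) (a : ∀ j, A j)
    (hbr : IsBR1 ui i (a i) a)
    {j1 j2 : Fin n} (h12 : j1 ≠ j2) (hi1 : j1 ≠ i) (hi2 : j2 ≠ i)
    {x1 : A j1} (hx1 : x1 ≠ a j1) {y1 : A j2} (hy1 : y1 ≠ a j2) :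
    ∃ w : ∀ i : Fin n, (∀ j, A j) → ℝ, w i = ui ∧ PNE w a ∧ ∀ b, PNE w b → b = a := by
  classical
  -- target maps
  set σ : A i → A j2 → A j1 := fun v y =>
    if v = a i then a j1 else (if y = a j2 then a j1 else x1) with hσ
  set τ : A i → A j1 → A j2 := fun v x =>
    if v = a i then a j2 else (if x = a j1 then y1 else a j2) with hτ
  set F1 : (∀ k, A k) → A j1 := fun b => σ (b i) (b j2) with hF1
  set F2 : (∀ k, A k) → A j2 := fun b => τ (b i) (b j1) with hF2
  set w : ∀ k : Fin n, (∀ j, A j) → ℝ := fun k b =>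
    if k = i then ui b
    else if h : k = j1 then (if b j1 = F1 b then 1 else 0)
    else if h : k = j2 then (if b j2 = F2 b then 1 else 0)
    else (if b k = a k then 1 else 0) with hw
  have hwi : w i = ui := by
    funext b; simp [hw]
  -- characterization of PNE of w
  have hBRj1 : ∀ (β : A j1) (b : ∀ k, A k), IsBR1 (w j1) j1 β b ↔ β = F1 b := by
    intro β b
    have : w j1 = fun c => if c j1 = F1 c then (1:ℝ) else 0 := by
      funext c; simp [hw, hi1, h12]
    rw [this]
    apply isBR1_indicator
    intro c γ
    simp [hF1, Function.update_of_ne (Ne.symm hi1), Function.update_of_ne (Ne.symm h12)]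
  have hBRj2 : ∀ (β : A j2) (b : ∀ k, A k), IsBR1 (w j2) j2 β b ↔ β = F2 b := by
    intro β b
    have : w j2 = fun c => if c j2 = F2 c then (1:ℝ) else 0 := by
      funext c; simp [hw, hi2, Ne.symm h12]
    rw [this]
    apply isBR1_indicator
    intro c γ
    simp [hF2, Function.update_of_ne (Ne.symm hi2), Function.update_of_ne h12]
  have hBRother : ∀ (k : Fin n), k ≠ i → k ≠ j1 → k ≠ j2 →
      ∀ (β : A k) (b : ∀ k, A k), IsBR1 (w k) k β b ↔ β = a k := by
    intro k hk hk1 hk2 β b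
    have : w k = fun c => if c k = a k then (1:ℝ) else 0 := by
      funext c; simp [hw, hk, hk1, hk2]
    rw [this]
    exact isBR1_indicator (F := fun _ => a k) (fun c γ => rfl) β b
  refine ⟨w, hwi, ?_, ?_⟩
  · -- a is a PNE
    intro k
    by_cases hk : k = i
    · subst hk
      rw [hwi]
      exact hbr
    · by_cases hk1 : k = j1
      · subst hk1
        rw [hBRj1]
        simp [hF1, hσ]
      · by_cases hk2 : k = j2
        · subst hk2
          rw [hBRj2]
          simp [hF2, hτ]
        · rw [hBRother k hk hk1 hk2]
  · -- uniqueness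
    intro s hs
    have hs1 : s j1 = F1 s := (hBRj1 (s j1) s).1 (hs j1)
    have hs2 : s j2 = F2 s := (hBRj2 (s j2) s).1 (hs j2)
    by_cases hv : s i = a i
    · funext k
      by_cases hk : k = i
      · subst hk; exact hv
      · by_cases hk1 : k = j1
        · subst hk1
          rw [hs1]
          simp [hF1, hσ, hv]
        · by_cases hk2 : k = j2
          · subst hk2
            rw [hs2]
            simp [hF2, hτ, hv]
          · exact (hBRother k hk hk1 hk2 (s k) s).1 (hs k)
    · -- matching pennies contradiction
      exfalso
      rw [hF1] at hs1
      rw [hF2] at hs2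
      simp only [hσ, hτ, if_neg hv] at hs1 hs2
      by_cases hx : s j1 = a j1
      · rw [if_pos hx] at hs2
        rw [hs2] at hs1
        rw [if_neg hy1] at hs1
        exact hx1 (hs1 ▸ hx)
      · rw [if_neg hx] at hs2
        rw [hs2] at hs1
        rw [if_pos rfl] at hs1
        exact hx hs1

/-- The selector partner construction for the two-nontrivial-coordinates case. -/
lemma exists_uniquePNE_selector (ui : (∀ j, A j) → ℝ) (i : Fin n) (a : ∀ j, A j)
    (hbr : IsBR1 ui i (a i) a)
    {j : Fin n} (hij : j ≠ i)
    (hsub : ∀ k, k ≠ i → k ≠ j → Subsingleton (A k))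
    (φ : A i → A j) (hφa : φ (a i) = a j)
    (hφ : ∀ v, v ≠ a i → ∀ s : ∀ k, A k, s j = φ v → ¬ IsBR1 ui i v s) :
    ∃ w : ∀ i : Fin n, (∀ j, A j) → ℝ, w i = ui ∧ PNE w a ∧ ∀ b, PNE w b → b = a := by
  classical
  set F : (∀ k, A k) → A j := fun b => φ (b i) with hF
  set w : ∀ k : Fin n, (∀ j, A j) → ℝ := fun k b =>
    if k = i then ui b
    else if h : k = j then (if b j = F b then 1 else 0)
    else 0 with hw
  have hwi : w i = ui := by funext b; simp [hw]
  have hBRj : ∀ (β : A j) (b : ∀ k, A k), IsBR1 (w j) j β b ↔ β = F b := by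
    intro β b
    have : w j = fun c => if c j = F c then (1:ℝ) else 0 := by
      funext c; simp [hw, hij]
    rw [this]
    apply isBR1_indicator
    intro c γ
    simp [hF, Function.update_of_ne (Ne.symm hij)]
  refine ⟨w, hwi, ?_, ?_⟩
  · intro k
    by_cases hk : k = i
    · subst hk; rw [hwi]; exact hbr
    · by_cases hkj : k = j
      · subst hkj
        rw [hBRj]
        simp [hF, hφa]
      · exact isBR1_of_subsingleton (hsub k hk hkj) _ _
  · intro s hs
    have hsj : s j = F s := (hBRj (s j) s).1 (hs j)
    by_cases hv : s i = a i
    · funext k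
      by_cases hk : k = i
      · subst hk; exact hv
      · by_cases hkj : k = j
        · subst hkj
          rw [hsj]
          simp [hF, hv, hφa]
        · exact @Subsingleton.elim _ (hsub k hk hkj) _ _
    · exfalso
      have hbri : IsBR1 ui i (s i) s := by
        have := hs i
        rwa [hwi] at this
      exact hφ (s i) hv s (by rw [hsj]) hbri

end Partners

/-! ### Section 6 : reaching a PNE under SOR -/

section Reach

variable [∀ i, Fintype (A i)] [∀ i, DecidableEq (A i)] [∀ i, Nonempty (A i)]

/-- Coordinates with subsingleton action spaces are automatically pinned. -/
lemma pin_of_subsingleton {P : ∀ i : Fin n, ((∀ j, A j) → ℝ) → (∀ j, A j) → A i → ℝ}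
    (hval : ValidProto P) {i : Fin n} (hsub : Subsingleton (A i))
    (ui : (∀ j, A j) → ℝ) (c : ∀ j, A j) : P i ui c (c i) = 1 := by
  have h := hval i ui c
  have : ∑ α : A i, P i ui c α = P i ui c (c i) := by
    apply Finset.sum_eq_single_of_mem (c i) (Finset.mem_univ _)
    intro β _ hβ
    exact absurd (Subsingleton.elim β (c i)) hβ
  rw [this] at h
  exact h.2

/-- If at every state every best-responding coordinate is pinned, then positive
probability under the protocol implies positive probability under SOR. -/
lemma transfer_pos {P : ∀ i : Fin n, ((∀ j, A j) → ℝ) → (∀ j, A j) → A i → ℝ}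
    (hval : ValidProto P) (u : ∀ i : Fin n, (∀ j, A j) → ℝ)
    (hpin : ∀ (c : ∀ j, A j) (i : Fin n), IsBR1 (u i) i (c i) c → P i (u i) c (c i) = 1)
    (b : ∀ j, A j) (t : ℕ) (q : ∀ j, A j)
    (h : 0 < evolve (fun i => P i (u i)) b t q) :
    0 < evolve (sorF u) b t q := by
  classical
  set fP : ∀ i : Fin n, (∀ j, A j) → A i → ℝ := fun i => P i (u i) with hfP
  have hvP : ValidF fP := fun i a => hval i (u i) a
  induction t generalizing q with
  | zero =>
      rw [evolve_zero] at h ⊢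
      exact h
  | succ t ih =>
      rw [evolve_succ] at h
      have hex : ∃ a : ∀ j, A j, 0 < evolve fP b t a * kernel fP a q := by
        by_contra hc
        push_neg at hc
        have : ∑ a : ∀ j, A j, evolve fP b t a * kernel fP a q ≤ 0 :=
          Finset.sum_nonpos fun a _ => hc a
        linarith
      obtain ⟨a, ha⟩ := hex
      have hev : 0 < evolve fP b t a := by
        rcases lt_or_ge 0 (evolve fP b t a) with h1 | h1
        · exact h1
        · exfalso
          have h2 : evolve fP b t a = 0 :=
            le_antisymm h1 (evolve_nonneg hvP b t a)
          rw [h2, zero_mul] at ha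
          exact lt_irrefl 0 ha
      have hker : 0 < kernel fP a q := by
        rcases lt_or_ge 0 (kernel fP a q) with h1 | h1
        · exact h1
        · exfalso
          have h2 : kernel fP a q = 0 := le_antisymm h1 (kernel_nonneg hvP a q)
          rw [h2, mul_zero] at ha
          exact lt_irrefl 0 ha
      have hfac : ∀ i : Fin n, 0 < fP i a (q i) := by
        intro i
        rcases lt_or_ge 0 (fP i a (q i)) with h1 | h1
        · exact h1
        · exfalso
          have h2 : fP i a (q i) = 0 := le_antisymm h1 ((hvP i a).1 (q i))
          have : kernel fP a q = 0 :=
            Finset.prod_eq_zero (Finset.mem_univ i) h2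
          rw [this] at hker
          exact lt_irrefl 0 hker
      have hkeep : ∀ i : Fin n, IsBR1 (u i) i (a i) a → q i = a i := by
        intro i hbr
        by_contra hne
        have h1 : fP i a (a i) = 1 := hpin a i hbr
        have h2 : fP i a (a i) + fP i a (q i) ≤ ∑ α : A i, fP i a α := by
          rw [← Finset.sum_pair (Ne.symm hne)]
          apply Finset.sum_le_sum_of_subset_of_nonneg (Finset.subset_univ _)
          intro β _ _
          exact (hvP i a).1 β
        rw [(hvP i a).2, h1] at h2
        have := hfac i
        linarith
      have hsor : 0 < kernel (sorF u) a q := sor_kernel_pos u hkeep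
      have hsev : 0 < evolve (sorF u) b t a := ih a hev
      rw [evolve_succ]
      calc (0:ℝ) < evolve (sorF u) b t a * kernel (sorF u) a q := mul_pos hsev hsor
        _ ≤ ∑ c : ∀ j, A j, evolve (sorF u) b t c * kernel (sorF u) c q := by
            apply Finset.single_le_sum (f := fun c => evolve (sorF u) b t c * kernel (sorF u) c q)
              (fun c _ => mul_nonneg (evolve_nonneg (validF_sor u) b t c)
                (kernel_nonneg (validF_sor u) c q)) (Finset.mem_univ a)

/-- Under full pinning, self-stabilization of `P` yields SOR reachability. -/
lemma reach_of_pins {P : ∀ i : Fin n, ((∀ j, A j) → ℝ) → (∀ j, A j) → A i → ℝ}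
    (hval : ValidProto P) (hP : SelfStab P) (u : ∀ i : Fin n, (∀ j, A j) → ℝ)
    (hpne : ∃ p, PNE u p)
    (hpin : ∀ (c : ∀ j, A j) (i : Fin n), IsBR1 (u i) i (c i) c → P i (u i) c (c i) = 1)
    (b : ∀ j, A j) : ∃ t, 0 < pmass u b t := by
  classical
  have htend := hP u hpne b
  have hev : ∀ᶠ t in Filter.atTop,
      0 < ∑ c ∈ Finset.univ.filter (fun c => PNE u c), evolve (fun i => P i (u i)) b t c :=
    htend.eventually (eventually_gt_nhds one_pos)
  obtain ⟨t, ht⟩ := hev.exists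
  have hex : ∃ q ∈ Finset.univ.filter (fun c => PNE u c),
      0 < evolve (fun i => P i (u i)) b t q := by
    by_contra hc
    push_neg at hc
    have : ∑ c ∈ Finset.univ.filter (fun c => PNE u c), evolve (fun i => P i (u i)) b t c ≤ 0 :=
      Finset.sum_nonpos fun c hcmem => hc c hcmem
    linarith
  obtain ⟨q, hqmem, hq⟩ := hex
  refine ⟨t, ?_⟩
  have hs := transfer_pos hval u hpin b t q hq
  unfold pmass
  calc (0:ℝ) < evolve (sorF u) b t q := hs
    _ ≤ ∑ c ∈ Finset.univ.filter (fun c => PNE u c), evolve (sorF u) b t c :=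
      Finset.single_le_sum (fun c _ => evolve_nonneg (validF_sor u) b t c) hqmem

/-- One SOR step preserving positivity. -/
lemma sor_reach_step (u : ∀ i : Fin n, (∀ j, A j) → ℝ) {b c d : ∀ j, A j} {t : ℕ}
    (h : 0 < evolve (sorF u) b t c)
    (hkeep : ∀ i, IsBR1 (u i) i (c i) c → d i = c i) :
    0 < evolve (sorF u) b (t+1) d := by
  rw [evolve_succ]
  calc (0:ℝ) < evolve (sorF u) b t c * kernel (sorF u) c d :=
      mul_pos h (sor_kernel_pos u hkeep)
    _ ≤ ∑ a : ∀ j, A j, evolve (sorF u) b t a * kernel (sorF u) a d :=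
      Finset.single_le_sum (f := fun a => evolve (sorF u) b t a * kernel (sorF u) a d)
        (fun a _ => mul_nonneg (evolve_nonneg (validF_sor u) b t a)
          (kernel_nonneg (validF_sor u) a d)) (Finset.mem_univ c)

lemma pmass_pos_of_evolve_pne (u : ∀ i : Fin n, (∀ j, A j) → ℝ) {b q : ∀ j, A j} {t : ℕ}
    (hq : PNE u q) (h : 0 < evolve (sorF u) b t q) : 0 < pmass u b t := by
  unfold pmass
  calc (0:ℝ) < evolve (sorF u) b t q := h
    _ ≤ ∑ c ∈ Finset.univ.filter (fun c => PNE u c), evolve (sorF u) b t c :=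
      Finset.single_le_sum (fun c _ => evolve_nonneg (validF_sor u) b t c)
        (by simp [hq])

lemma evolve_self_pos (u : ∀ i : Fin n, (∀ j, A j) → ℝ) (b : ∀ j, A j) :
    0 < evolve (sorF u) b 0 b := by
  rw [evolve_zero, if_pos rfl]
  norm_num

/-- Reachability when at most one coordinate is nontrivial. -/
lemma reach_one (u : ∀ i : Fin n, (∀ j, A j) → ℝ) (i : Fin n)
    (hsub : ∀ k, k ≠ i → Subsingleton (A k)) (b : ∀ j, A j) :
    ∃ t, 0 < pmass u b t := by
  classical
  by_cases hb : PNE u b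
  · exact ⟨0, by rw [pmass_pne u hb]; norm_num⟩
  · obtain ⟨y, hy⟩ := exists_isBR1 (u i) i b
    set c : ∀ j, A j := Function.update b i y with hc
    have hnotbr : ¬ IsBR1 (u i) i (b i) b := by
      intro hbr
      apply hb
      intro k
      by_cases hk : k = i
      · subst hk; exact hbr
      · exact isBR1_of_subsingleton (hsub k hk) _ _
    have hkeep : ∀ k, IsBR1 (u k) k (b k) b → c k = b k := by
      intro k hbr
      by_cases hk : k = i
      · subst hk; exact absurd hbr hnotbr
      · simp [hc, Function.update_of_ne hk]
    have hpos : 0 < evolve (sorF u) b 1 c :=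
      sor_reach_step u (evolve_self_pos u b) hkeep
    have hcpne : PNE u c := by
      intro k
      by_cases hk : k = i
      · subst hk
        have : c k = y := by simp [hc]
        rw [this]
        exact isBR1_ext (fun m hm => (Function.update_of_ne hm y b).symm) hy
      · exact isBR1_of_subsingleton (hsub k hk) _ _
    exact ⟨1, pmass_pos_of_evolve_pne u hcpne hpos⟩

/-- Reachability when all coordinates are trivial. -/
lemma reach_all_trivial (u : ∀ i : Fin n, (∀ j, A j) → ℝ)
    (hsub : ∀ k : Fin n, Subsingleton (A k)) (b : ∀ j, A j) :
    ∃ t, 0 < pmass u b t := by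
  have hb : PNE u b := fun k => isBR1_of_subsingleton (hsub k) _ _
  exact ⟨0, by rw [pmass_pne u hb]; norm_num⟩

/-- Reachability in the two-nontrivial-coordinate case when coordinate `i` has a
weakly dominant action. -/
lemma reach_wdom (u : ∀ i : Fin n, (∀ j, A j) → ℝ) {i j : Fin n} (hij : i ≠ j)
    (hsub : ∀ k, k ≠ i → k ≠ j → Subsingleton (A k))
    {v : A i} (hv : ∀ s, IsBR1 (u i) i v s) (b : ∀ j, A j) :
    ∃ t, 0 < pmass u b t := by
  classical
  -- finishing move from a state where coordinate i is parked at v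
  have finish : ∀ (c : ∀ k, A k) (t : ℕ), c i = v → 0 < evolve (sorF u) b t c →
      ∃ t', 0 < pmass u b t' := by
    intro c t hci hpos
    by_cases hc : PNE u c
    · exact ⟨t, pmass_pos_of_evolve_pne u hc hpos⟩
    · obtain ⟨y, hy⟩ := exists_isBR1 (u j) j c
      have hibr : IsBR1 (u i) i (c i) c := by rw [hci]; exact hv c
      have hjnot : ¬ IsBR1 (u j) j (c j) c := by
        intro hjbr
        apply hc
        intro k
        by_cases hk : k = i
        · subst hk; exact hibr
        · by_cases hkj : k = j
          · subst hkj; exact hjbr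
          · exact isBR1_of_subsingleton (hsub k hk hkj) _ _
      set d : ∀ k, A k := Function.update c j y with hd
      have hkeep : ∀ k, IsBR1 (u k) k (c k) c → d k = c k := by
        intro k hbr
        by_cases hkj : k = j
        · subst hkj; exact absurd hbr hjnot
        · simp [hd, Function.update_of_ne hkj]
      have hdpos : 0 < evolve (sorF u) b (t+1) d := sor_reach_step u hpos hkeep
      have hdpne : PNE u d := by
        intro k
        by_cases hk : k = i
        · subst hk
          have : d k = v := by rw [hd, Function.update_of_ne hij, hci]
          rw [this]
          exact hv d
        · by_cases hkj : k = j
          · subst hkj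
            have : d k = y := by simp [hd]
            rw [this]
            exact isBR1_ext (fun m hm => (Function.update_of_ne hm y c).symm) hy
          · exact isBR1_of_subsingleton (hsub k hk hkj) _ _
      exact ⟨t+1, pmass_pos_of_evolve_pne u hdpne hdpos⟩
  by_cases hb : PNE u b
  · exact ⟨0, by rw [pmass_pne u hb]; norm_num⟩
  · by_cases hbi : IsBR1 (u i) i (b i) b
    · -- j is not best responding at b; roll j to a best response first
      have hjnot : ¬ IsBR1 (u j) j (b j) b := by
        intro hjbr
        apply hb
        intro k
        by_cases hk : k = i
        · subst hk; exact hbi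
        · by_cases hkj : k = j
          · subst hkj; exact hjbr
          · exact isBR1_of_subsingleton (hsub k hk hkj) _ _
      obtain ⟨y, hy⟩ := exists_isBR1 (u j) j b
      set c : ∀ k, A k := Function.update b j y with hc
      have hkeep : ∀ k, IsBR1 (u k) k (b k) b → c k = b k := by
        intro k hbr
        by_cases hkj : k = j
        · subst hkj; exact absurd hbr hjnot
        · simp [hc, Function.update_of_ne hkj]
      have hcpos : 0 < evolve (sorF u) b 1 c :=
        sor_reach_step u (evolve_self_pos u b) hkeep
      by_cases hcp : PNE u c
      · exact ⟨1, pmass_pos_of_evolve_pne u hcp hcpos⟩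
      · -- at c, coordinate j is best responding, so i is not
        have hjbr : IsBR1 (u j) j (c j) c := by
          have : c j = y := by simp [hc]
          rw [this]
          exact isBR1_ext (fun m hm => (Function.update_of_ne hm y b).symm) hy
        have hinot : ¬ IsBR1 (u i) i (c i) c := by
          intro hibr
          apply hcp
          intro k
          by_cases hk : k = i
          · subst hk; exact hibr
          · by_cases hkj : k = j
            · subst hkj; exact hjbr
            · exact isBR1_of_subsingleton (hsub k hk hkj) _ _
        set d : ∀ k, A k := Function.update c i v with hd
        have hkeep2 : ∀ k, IsBR1 (u k) k (c k) c → d k = c k := by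
          intro k hbr
          by_cases hk : k = i
          · subst hk; exact absurd hbr hinot
          · simp [hd, Function.update_of_ne hk]
        have hdpos : 0 < evolve (sorF u) b 2 d := sor_reach_step u hcpos hkeep2
        exact finish d 2 (by simp [hd]) hdpos
    · -- park i at v directly
      set c : ∀ k, A k := Function.update b i v with hc
      have hkeep : ∀ k, IsBR1 (u k) k (b k) b → c k = b k := by
        intro k hbr
        by_cases hk : k = i
        · subst hk; exact absurd hbr hbi
        · simp [hc, Function.update_of_ne hk]
      have hcpos : 0 < evolve (sorF u) b 1 c :=
        sor_reach_step u (evolve_self_pos u b) hkeep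
      exact finish c 1 (by simp [hc]) hcpos

end Reach

section Main

variable [∀ i, Fintype (A i)] [∀ i, DecidableEq (A i)] [∀ i, Nonempty (A i)]

/-- The central lemma: a valid self-stabilizing protocol forces SOR reachability of
the PNE set in every game having a PNE. -/
lemma sor_reach {P : ∀ i : Fin n, ((∀ j, A j) → ℝ) → (∀ j, A j) → A i → ℝ}
    (hval : ValidProto P) (hP : SelfStab P)
    (u : ∀ i : Fin n, (∀ j, A j) → ℝ) (hpne : ∃ p, PNE u p) (b : ∀ j, A j) :
    ∃ t, 0 < pmass u b t := by
  classical
  set T : Finset (Fin n) := Finset.univ.filter (fun i => 1 < Fintype.card (A i)) with hT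
  have hsub_of_not : ∀ k, k ∉ T → Subsingleton (A k) := by
    intro k hk
    rw [hT, Finset.mem_filter] at hk
    push_neg at hk
    have := hk (Finset.mem_univ k)
    exact Fintype.card_le_one_iff_subsingleton.mp (by omega)
  have hmem_card : ∀ k ∈ T, 1 < Fintype.card (A k) := by
    intro k hk
    rw [hT, Finset.mem_filter] at hk
    exact hk.2
  rcases lt_or_ge T.card 2 with hc2 | hc2
  · by_cases hT0 : T = ∅
    · exact reach_all_trivial u (fun k => hsub_of_not k (by simp [hT0])) b
    · obtain ⟨i, hi⟩ := Finset.nonempty_iff_ne_empty.mpr hT0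
      refine reach_one u i (fun k hk => hsub_of_not k ?_) b
      intro hkT
      have hcard : T.card ≤ 1 := by omega
      exact hk (Finset.card_le_one.mp hcard k hkT i hi)
  · rcases eq_or_lt_of_le hc2 with hc2e | hc3
    · -- exactly two nontrivial coordinates
      obtain ⟨i0, j0, hne, hTeq⟩ := Finset.card_eq_two.mp hc2e.symm
      have hsub2 : ∀ k, k ≠ i0 → k ≠ j0 → Subsingleton (A k) := by
        intro k hk1 hk2
        apply hsub_of_not
        rw [hTeq]
        simp [hk1, hk2]
      by_cases hu1 : ∃ v : A i0, ∀ s, IsBR1 (u i0) i0 v s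
      · obtain ⟨v, hv⟩ := hu1
        exact reach_wdom u hne hsub2 hv b
      · by_cases hu2 : ∃ v : A j0, ∀ s, IsBR1 (u j0) j0 v s
        · obtain ⟨v, hv⟩ := hu2
          exact reach_wdom u (Ne.symm hne) (fun k h1 h2 => hsub2 k h2 h1) hv b
        · -- no weakly dominant actions: full pinning via selectors
          push_neg at hu1 hu2
          refine reach_of_pins hval hP u hpne ?_ b
          intro c i hbr
          by_cases hi0 : i = i0
          · subst hi0
            choose wit hwit using hu1
            set φ : A i → A j0 := fun v => if v = c i then c j0 else (wit v) j0 with hφ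
            have hφa : φ (c i) = c j0 := by simp [hφ]
            have hcond : ∀ v, v ≠ c i → ∀ s : ∀ k, A k, s j0 = φ v → ¬ IsBR1 (u i) i v s := by
              intro v hvne s hsj hbrv
              apply hwit v
              refine isBR1_ext (a := s) ?_ hbrv
              intro m hm
              by_cases hmj : m = j0
              · subst hmj
                rw [hsj, hφ]
                simp [hvne]
              · exact @Subsingleton.elim _ (hsub2 m hm hmj) _ _
            obtain ⟨w, hwi, hwa, hwuniq⟩ := exists_uniquePNE_selector (u i) i c hbr
              (Ne.symm hne) hsub2 φ hφa hcond
            have := pin_of_uniquePNE hval hP hwa hwuniq i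
            rwa [hwi] at this
          · by_cases hj0 : i = j0
            · subst hj0
              choose wit hwit using hu2
              set φ : A i → A i0 := fun v => if v = c i then c i0 else (wit v) i0 with hφ
              have hφa : φ (c i) = c i0 := by simp [hφ]
              have hcond : ∀ v, v ≠ c i → ∀ s : ∀ k, A k, s i0 = φ v → ¬ IsBR1 (u i) i v s := by
                intro v hvne s hsj hbrv
                apply hwit v
                refine isBR1_ext (a := s) ?_ hbrv
                intro m hm
                by_cases hmi : m = i0
                · subst hmi
                  rw [hsj, hφ]
                  simp [hvne]
                · exact @Subsingleton.elim _ (hsub2 m hmi hm) _ _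
              obtain ⟨w, hwi, hwa, hwuniq⟩ := exists_uniquePNE_selector (u i) i c hbr
                hne (fun k h1 h2 => hsub2 k h2 h1) φ hφa hcond
              have := pin_of_uniquePNE hval hP hwa hwuniq i
              rwa [hwi] at this
            · exact pin_of_subsingleton hval (hsub2 i hi0 hj0) _ c
    · -- at least three nontrivial coordinates : pennies pinning
      refine reach_of_pins hval hP u hpne ?_ b
      intro c i hbr
      by_cases hsubi : Subsingleton (A i)
      · exact pin_of_subsingleton hval hsubi _ c
      · have hiT : i ∈ T := by
          rw [hT, Finset.mem_filter]
          refine ⟨Finset.mem_univ i, ?_⟩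
          rw [Fintype.one_lt_card_iff_nontrivial]
          exact not_subsingleton_iff_nontrivial.mp hsubi
        have herase : 1 < (T.erase i).card := by
          rw [Finset.card_erase_of_mem hiT]
          omega
        obtain ⟨j1, hj1, j2, hj2, hj12⟩ := Finset.one_lt_card.mp herase
        have hj1i : j1 ≠ i := Finset.ne_of_mem_erase hj1
        have hj2i : j2 ≠ i := Finset.ne_of_mem_erase hj2
        obtain ⟨x1, hx1⟩ := Fintype.exists_ne_of_one_lt_card
          (hmem_card j1 (Finset.mem_of_mem_erase hj1)) (c j1)
        obtain ⟨y1, hy1⟩ := Fintype.exists_ne_of_one_lt_card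
          (hmem_card j2 (Finset.mem_of_mem_erase hj2)) (c j2)
        obtain ⟨w, hwi, hwa, hwuniq⟩ := exists_uniquePNE_pennies (u i) i c hbr
          hj12 hj1i hj2i hx1 hy1
        have := pin_of_uniquePNE hval hP hwa hwuniq i
        rwa [hwi] at this

end Main

/-- For every `n`-node state space `A`, there is a historyless randomized uncoupled
protocol self-stabilizing on all games over `A` if and only if the stay-or-roll
protocol is self-stabilizing on all games over `A`. -/
theorem stmt15 (n : ℕ) (A : Fin n → Type*)
    [∀ i, Fintype (A i)] [∀ i, DecidableEq (A i)] [∀ i, Nonempty (A i)] :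
    (∃ P : ∀ i : Fin n, ((∀ j, A j) → ℝ) → (∀ j, A j) → A i → ℝ,
      ValidProto P ∧ SelfStab P) ↔
    SelfStab (fun i : Fin n => SOR (A := A) i) := by
  constructor
  · rintro ⟨P, hval, hP⟩
    intro u hpne a0
    have hreach : ∀ b, ∃ t, 0 < pmass u b t := sor_reach hval hP u hpne
    exact sor_tendsto_of_reach u hreach a0
  · intro h
    exact ⟨fun i : Fin n => SOR (A := A) i, fun i ui a => validF_sor (fun j => ui) i a, h⟩
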